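/- Let G be a finite connected graph with nonnegative integer edge weights, and let T be a spanning tree of G with edge set {e_1, …, e_r}. If the total weight w(e_1) + ⋯ + w(e_r) is minimal among all spanning trees of G, then T is a minimum weight spanning tree of G, i.e., for every pair of vertices v_0, v_r of G, the unique path in T from v_0 to v_r has maximum edge weight less than or equal to the maximum edge weight of every chain (walk) in G from v_0 to v_r. -/

import Mathlib

/-- The weight of a walk in an edge-weighted graph: the maximum of the weights
of its edges (`0` for a trivial walk). -/
def walkWeight {V : Type*} (w : Sym2 V → ℕ) {G : SimpleGraph V} {u v : V}
    (p : G.Walk u v) : ℕ :=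
  (p.edges.map w).foldr max 0

/-- The total weight of a graph: the sum of the weights of its edges. -/
noncomputable def totalWeight {V : Type*} [Fintype V] (w : Sym2 V → ℕ)
    (T : SimpleGraph V) : ℕ :=
  ∑ e ∈ (Set.toFinite T.edgeSet).toFinset, w e

open SimpleGraph

private lemma foldr_max_le_iff (l : List ℕ) (c : ℕ) :
    l.foldr max 0 ≤ c ↔ ∀ a ∈ l, a ≤ c := by
  induction l with
  | nil => simp
  | cons a l ih => simp [max_le_iff, ih]

lemma walkWeight_le_iff {V : Type*} (w : Sym2 V → ℕ) {G : SimpleGraph V} {u v : V}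
    (p : G.Walk u v) (c : ℕ) : walkWeight w p ≤ c ↔ ∀ e ∈ p.edges, w e ≤ c := by
  unfold walkWeight
  rw [foldr_max_le_iff]
  simp

lemma le_walkWeight {V : Type*} (w : Sym2 V → ℕ) {G : SimpleGraph V} {u v : V}
    (q : G.Walk u v) {e : Sym2 V} (he : e ∈ q.edges) : w e ≤ walkWeight w q :=
  (walkWeight_le_iff w q _).1 le_rfl e he

/-- A walk with nodup edges containing the edge `s(a,b)` splits into a part
reaching `a` and a part reaching `b`, within the graph with `s(a,b)` removed. -/
lemma reach_split {V : Type*} {T : SimpleGraph V} {a b v₀ vᵣ : V}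
    (p : T.Walk v₀ vᵣ) (ht : p.edges.Nodup) (he : s(a, b) ∈ p.edges) :
    ((T.deleteEdges {s(a, b)}).Reachable v₀ a ∧ (T.deleteEdges {s(a, b)}).Reachable b vᵣ) ∨
    ((T.deleteEdges {s(a, b)}).Reachable v₀ b ∧ (T.deleteEdges {s(a, b)}).Reachable a vᵣ) := by
  induction p with
  | nil => simp at he
  | @cons u m v hadj p ih =>
    rw [Walk.edges_cons, List.nodup_cons] at ht
    rw [Walk.edges_cons, List.mem_cons] at he
    rcases he with heq | hmem
    · -- the head edge is s(a,b); the rest avoids it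
      have hnp : s(a, b) ∉ p.edges := heq ▸ ht.1
      have hw : ∀ e ∈ p.edges, e ∉ ({s(a, b)} : Set (Sym2 V)) := by
        intro e hep hes
        rw [Set.mem_singleton_iff] at hes
        exact hnp (hes ▸ hep)
      have hp' : (T.deleteEdges {s(a, b)}).Reachable m v := (p.toDeleteEdges _ hw).reachable
      rcases Sym2.eq_iff.1 heq.symm with ⟨rfl, rfl⟩ | ⟨rfl, rfl⟩
      · exact Or.inl ⟨Reachable.refl _, hp'⟩
      · exact Or.inr ⟨Reachable.refl _, hp'⟩
    · -- the edge is in the tail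
      have hne : s(u, m) ≠ s(a, b) := fun h => ht.1 (h ▸ hmem)
      have hadj' : (T.deleteEdges {s(a, b)}).Adj u m :=
        deleteEdges_adj.mpr ⟨hadj, by simpa using hne⟩
      rcases ih ht.2 hmem with ⟨ha1, ha2⟩ | ⟨ha1, ha2⟩
      · exact Or.inl ⟨hadj'.reachable.trans ha1, ha2⟩
      · exact Or.inr ⟨hadj'.reachable.trans ha1, ha2⟩

/-- A walk from inside a vertex set to outside it crosses the boundary. -/
lemma exists_cross {V : Type*} {G : SimpleGraph V} (A : V → Prop) {u v : V}
    (q : G.Walk u v) (hu : A u) (hv : ¬ A v) :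
    ∃ x y, G.Adj x y ∧ s(x, y) ∈ q.edges ∧ A x ∧ ¬ A y := by
  induction q with
  | nil => exact absurd hu hv
  | @cons u m v hadj q ih =>
    by_cases hm : A m
    · obtain ⟨x, y, h1, h2, h3, h4⟩ := ih hm hv
      exact ⟨x, y, h1, by simp [h2], h3, h4⟩
    · exact ⟨u, m, hadj, by simp, hu, hm⟩

private lemma key {V : Type*} [Fintype V] (G : SimpleGraph V) (w : Sym2 V → ℕ)
    (T : SimpleGraph V) (hTG : T ≤ G) (hT : T.IsTree)
    (hmin : ∀ T' : SimpleGraph V, T' ≤ G → T'.IsTree →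
      totalWeight w T ≤ totalWeight w T')
    {v₀ vᵣ a b : V} (habT : T.Adj a b)
    (q : G.Walk v₀ vᵣ) (hwlt : walkWeight w q < w s(a, b))
    (h1 : (T.deleteEdges {s(a, b)}).Reachable v₀ a)
    (h2 : (T.deleteEdges {s(a, b)}).Reachable b vᵣ) : False := by
  classical
  set T₀ := T.deleteEdges {s(a, b)} with hT₀def
  have hT₀T : T₀ ≤ T := T.deleteEdges_le _
  have hbr : ¬ T₀.Reachable a b :=
    ((isAcyclic_iff_forall_adj_isBridge.1 hT.IsAcyclic) habT)
  -- every vertex is in the component of `v₀` or of `b`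
  have hsides : ∀ u : V, T₀.Reachable u v₀ ∨ T₀.Reachable u b := by
    intro u
    obtain ⟨r⟩ := hT.isConnected.preconnected u vᵣ
    by_cases hm : s(a, b) ∈ r.bypass.edges
    · rcases reach_split r.bypass r.bypass_isPath.isTrail.edges_nodup hm with
        ⟨hua, _⟩ | ⟨hub, _⟩
      · exact Or.inl (hua.trans h1.symm)
      · exact Or.inr hub
    · have hw : ∀ e ∈ r.bypass.edges, e ∉ ({s(a, b)} : Set (Sym2 V)) := by
        intro e hep hes
        rw [Set.mem_singleton_iff] at hes
        exact hm (hes ▸ hep)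
      have : T₀.Reachable u vᵣ := (r.bypass.toDeleteEdges _ hw).reachable
      exact Or.inr (this.trans h2.symm)
  -- the crossing edge of q
  have hAv₀ : T₀.Reachable v₀ v₀ := Reachable.refl _
  have hAvᵣ : ¬ T₀.Reachable v₀ vᵣ := fun h => hbr (h1.symm.trans (h.trans h2.symm))
  obtain ⟨x, y, hxy, hfq, hAx, hAy⟩ := exists_cross (T₀.Reachable v₀) q hAv₀ hAvᵣ
  have hxyne : x ≠ y := hxy.ne
  have hfw : w s(x, y) < w s(a, b) := lt_of_le_of_lt (le_walkWeight w q hfq) hwlt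
  have hfT₀ : s(x, y) ∉ T₀.edgeSet := fun h => hAy (hAx.trans ((mem_edgeSet _).1 h).reachable)
  have hyb : T₀.Reachable y b := (hsides y).resolve_left (fun h => hAy h.symm)
  set T' := T₀ ⊔ SimpleGraph.edge x y with hT'def
  have hT₀T' : T₀ ≤ T' := le_sup_left
  have hexy : T'.Adj x y := (sup_adj _ _ _ _).2 (Or.inr ((edge_adj x y x y).2 ⟨Or.inl ⟨rfl, rfl⟩, hxyne⟩))
  have hT'G : T' ≤ G := by
    refine sup_le (le_trans hT₀T hTG) ?_
    intro u v h
    rcases (edge_adj x y u v).1 h with ⟨⟨rfl, rfl⟩ | ⟨rfl, rfl⟩, -⟩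
    · exact hxy
    · exact hxy.symm
  -- connectivity of T'
  have hreach : ∀ u : V, T'.Reachable u x := by
    intro u
    rcases hsides u with h | h
    · exact (h.trans hAx).mono hT₀T'
    · exact ((h.trans hyb.symm).mono hT₀T').trans hexy.symm.reachable
  have hT'conn : T'.Connected := by
    rw [connected_iff]
    exact ⟨fun u v => (hreach u).trans (hreach v).symm, hT.isConnected.nonempty⟩
  -- acyclicity of T'
  have hT'ac : T'.IsAcyclic := by
    intro v c hc
    by_cases hm : s(x, y) ∈ c.edges
    · have hrd := (adj_and_reachable_delete_edges_iff_exists_cycle.2 ⟨v, c, hc, hm⟩).2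
      have hle : T' \ SimpleGraph.fromEdgeSet {s(x, y)} ≤ T₀ := by
        intro u v' h
        obtain ⟨h1', h2'⟩ := (sdiff_adj _ _ _ _).1 h
        rcases (sup_adj _ _ _ _).1 h1' with h3 | h3
        · exact h3
        · exfalso
          apply h2'
          rw [fromEdgeSet_adj]
          rcases (edge_adj x y u v').1 h3 with ⟨⟨rfl, rfl⟩ | ⟨rfl, rfl⟩, hne⟩
          · exact ⟨rfl, hne⟩
          · exact ⟨Sym2.eq_swap, hne⟩
      exact hAy (hAx.trans (hrd.mono hle))
    · have hsub : ∀ e ∈ c.edges, e ∈ T.edgeSet := by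
        intro e he
        have hmem := c.edges_subset_edgeSet he
        rw [edgeSet_sup, edge_edgeSet_of_ne hxyne] at hmem
        rcases hmem with h | h
        · exact (edgeSet_subset_edgeSet.2 hT₀T) h
        · exact absurd (h ▸ he) hm
      exact hT.IsAcyclic (c.transfer T hsub) (hc.transfer hsub)
  have hT' : T'.IsTree := ⟨hT'conn, hT'ac⟩
  -- edge sets
  have hET' : T'.edgeSet = (T.edgeSet \ {s(a, b)}) ∪ {s(x, y)} := by
    rw [hT'def, edgeSet_sup, edge_edgeSet_of_ne hxyne, hT₀def, edgeSet_deleteEdges]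
  have heT : s(a, b) ∈ T.edgeSet := habT
  have hnotin : s(x, y) ∉ ((Set.toFinite T.edgeSet).toFinset.erase s(a, b)) := by
    rw [Finset.mem_erase, Set.Finite.mem_toFinset]
    rintro ⟨hne, hmem⟩
    exact hfT₀ (by rw [hT₀def, edgeSet_deleteEdges]; exact ⟨hmem, by simpa using hne⟩)
  have hsum : totalWeight w T' + w s(a, b) = totalWeight w T + w s(x, y) := by
    unfold totalWeight
    have hfin : (Set.toFinite T'.edgeSet).toFinset =
        insert s(x, y) ((Set.toFinite T.edgeSet).toFinset.erase s(a, b)) := by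
      ext e
      simp only [Set.Finite.mem_toFinset, Finset.mem_insert, Finset.mem_erase,
        Set.Finite.mem_toFinset, hET', Set.mem_union, Set.mem_diff, Set.mem_singleton_iff]
      tauto
    have h2' : ∑ e' ∈ (Set.toFinite T.edgeSet).toFinset.erase s(a, b), w e' + w s(a, b) =
        ∑ e' ∈ (Set.toFinite T.edgeSet).toFinset, w e' :=
      Finset.sum_erase_add _ _ (by rwa [Set.Finite.mem_toFinset])
    rw [hfin, Finset.sum_insert hnotin]
    omega
  have hle := hmin T' hT'G hT'
  omega

/-- Let `G` be a finite connected graph with nonnegative integer edge weights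
`w`, and let `T` be a spanning tree of `G`.  If the total weight of `T` is
minimal among all spanning trees of `G`, then `T` is a minimum weight spanning
tree of `G`: for every pair of vertices, the unique path between them in `T`
has maximum edge weight at most the maximum edge weight of every chain (walk)
in `G` between them. -/
theorem stmt8 {V : Type*} [Fintype V] (G : SimpleGraph V) (w : Sym2 V → ℕ)
    (hG : G.Connected) (T : SimpleGraph V) (hTG : T ≤ G) (hT : T.IsTree)
    (hmin : ∀ T' : SimpleGraph V, T' ≤ G → T'.IsTree →
      totalWeight w T ≤ totalWeight w T') :
    ∀ (v₀ vᵣ : V) (p : T.Walk v₀ vᵣ), p.IsPath →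
      ∀ q : G.Walk v₀ vᵣ, walkWeight w p ≤ walkWeight w q := by
  classical
  intro v₀ vᵣ p hp q
  by_contra hlt
  rw [walkWeight_le_iff] at hlt
  push_neg at hlt
  obtain ⟨e, hep, hew⟩ := hlt
  induction e using Sym2.ind with
  | _ a b =>
    have habT : T.Adj a b := (mem_edgeSet _).1 (p.edges_subset_edgeSet hep)
    rcases reach_split p hp.isTrail.edges_nodup hep with ⟨hr1, hr2⟩ | ⟨hr1, hr2⟩
    · exact key G w T hTG hT hmin habT q hew hr1 hr2
    · have hsw : s(b, a) = s(a, b) := Sym2.eq_swap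
      exact key G w T hTG hT hmin habT.symm q (by rw [hsw]; exact hew)
        (by rw [hsw]; exact hr1) (by rw [hsw]; exact hr2)
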